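/- Let Y : ℝ → ℝ be a continuous function and Z an antiderivative of Y, with ζ = e^Z integrable on ℝ. Let W : ℝ → ℝ be continuous with ζW integrable. If θ : ℝ → ℝ is a bounded C¹ solution of θ' + θY = W, then ∫_{−∞}^{∞} ζ(t)W(t) dt = 0. -/

import Mathlib

open MeasureTheory Real

/-- Section 13 of the paper, necessity of (13.2).
Let `Y : ℝ → ℝ` be continuous, `Z` an antiderivative of `Y`, `ζ = e^Z`
integrable on `ℝ`, and `W : ℝ → ℝ` continuous with `ζW` integrable.  If
`θ : ℝ → ℝ` is a bounded `C¹` solution of `θ' + θY = W`, then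
`∫_{−∞}^{∞} ζ(t)W(t) dt = 0`. -/
theorem stmt_11 (Y Z W θ : ℝ → ℝ)
    (hY : Continuous Y) (hW : Continuous W)
    (hZ : ∀ t, HasDerivAt Z (Y t) t)
    (hζ : Integrable (fun t => exp (Z t)))
    (hζW : Integrable (fun t => exp (Z t) * W t))
    (hθ : ∀ t, HasDerivAt θ (W t - θ t * Y t) t)
    (hbd : ∃ C, ∀ t, |θ t| ≤ C) :
    ∫ t, exp (Z t) * W t = 0 := by
  have hg : ∀ t, HasDerivAt (fun t => exp (Z t) * θ t) (exp (Z t) * W t) t := by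
    intro t
    have h1 : HasDerivAt (fun t => exp (Z t)) (exp (Z t) * Y t) t := (hZ t).exp
    have : HasDerivAt (fun t => exp (Z t) * θ t) _ t := h1.mul (hθ t)
    convert this using 1
    ring
  have hθc : Continuous θ := continuous_iff_continuousAt.2 fun t => (hθ t).continuousAt
  have hgint : Integrable (fun t => exp (Z t) * θ t) := by
    obtain ⟨C, hC⟩ := hbd
    have := hζ.bdd_mul hθc.aestronglyMeasurable (Filter.Eventually.of_forall fun t => by simpa using hC t)
    exact this.congr (Filter.Eventually.of_forall fun t => mul_comm _ _)
  exact integral_eq_zero_of_hasDerivAt_of_integrable hg hζW hgint
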